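/- Let F be a field, let C be a nonempty finite subset of F, let I and J be finite types, and consider the multivariate polynomial ring over F with indeterminates X_{(i,j)} indexed by I × J. Let χ, ξ : {1, ..., n} → I and χ', ξ' : {1, ..., n} → J be index assignments, and let D_1 = det[(i,j) ↦ X_{(χ(i), χ'(j))}] and D_2 = det[(i,j) ↦ X_{(ξ(i), ξ'(j))}] be the corresponding n × n determinant polynomials. If D_1 ≠ D_2 as polynomials, then for a random assignment S : I × J → C with all values chosen independently and uniformly at random from C, the probability that D_1 and D_2 evaluate to the same element of F at S is at most n / |C|. -/

import Mathlib

open MvPolynomial Finset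

private lemma sz_fin {F : Type*} [Field F] [DecidableEq F] (C : Finset F) :
    ∀ (n : ℕ) (p : MvPolynomial (Fin n) F), p ≠ 0 →
      ((Fintype.piFinset fun _ : Fin n => C).filter fun S => eval S p = 0).card * C.card
        ≤ p.totalDegree * C.card ^ n := by
  intro n
  induction n with
  | zero =>
    intro p hp
    have he : ((Fintype.piFinset fun _ : Fin 0 => C).filter fun S => eval S p = 0) = ∅ := by
      rw [Finset.filter_eq_empty_iff]
      intro S _
      rw [eq_C_of_isEmpty p, eval_C]
      intro h
      exact hp (by rw [eq_C_of_isEmpty p, h, map_zero])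
    rw [he]
    simp
  | succ n ih =>
    intro p hp
    set q : Polynomial (MvPolynomial (Fin n) F) := finSuccEquiv F n p with hqdef
    have hq0 : q ≠ 0 := by
      simpa [hqdef] using (EmbeddingLike.map_eq_zero_iff (f := finSuccEquiv F n)).not.mpr hp
    set d := q.natDegree with hd
    set c := q.leadingCoeff with hcdef
    have hc : c ≠ 0 := Polynomial.leadingCoeff_ne_zero.mpr hq0
    have htd : c.totalDegree + d ≤ p.totalDegree := by
      have := totalDegree_coeff_finSuccEquiv_add_le p d
        (by rw [← hqdef, Polynomial.coeff_natDegree]; exact hc)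
      rwa [← hqdef, Polynomial.coeff_natDegree] at this
    set Pn := Fintype.piFinset fun _ : Fin n => C with hPn
    set P := Fintype.piFinset fun _ : Fin (n + 1) => C with hP
    set T := P.filter fun S => eval S p = 0 with hT
    set A := Pn.filter fun s => eval s c = 0 with hA
    have hPncard : Pn.card = C.card ^ n := by
      simp [hPn, Fintype.card_piFinset]
    have tail_mem : ∀ S ∈ P, Fin.tail S ∈ Pn := by
      intro S hS
      rw [Fintype.mem_piFinset] at hS ⊢
      intro i; exact hS i.succ
    -- split T
    have hsplit : T.card ≤ (T.filter fun S => eval (Fin.tail S) c = 0).card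
        + (T.filter fun S => ¬ eval (Fin.tail S) c = 0).card := by
      rw [Finset.card_filter_add_card_filter_not]
    -- part A
    have hTA : (T.filter fun S => eval (Fin.tail S) c = 0).card ≤ C.card * A.card := by
      apply Finset.card_le_mul_card_image_of_maps_to (f := (Fin.tail : (Fin (n+1) → F) → Fin n → F)) (t := A)
      · intro S hS
        simp only [Finset.mem_filter, hT] at hS
        exact Finset.mem_filter.mpr ⟨tail_mem S hS.1.1, hS.2⟩
      · intro b _
        apply Finset.card_le_card_of_injOn (fun S => S 0) ?_ ?_
        · intro S hS
          simp only [Finset.mem_coe, Finset.mem_filter, hT, hP, Fintype.mem_piFinset] at hS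
          exact hS.1.1.1 0
        · intro S hS S' hS' h0
          simp only [Finset.mem_coe, Finset.mem_filter] at hS hS'
          have htt := hS.2.trans hS'.2.symm
          funext i
          refine Fin.cases h0 (fun j => congrFun htt j) i
    have hTA' : (T.filter fun S => eval (Fin.tail S) c = 0).card ≤ c.totalDegree * C.card ^ n := by
      refine hTA.trans ?_
      rw [mul_comm]
      exact ih c hc
    -- part B
    have hTB : (T.filter fun S => ¬ eval (Fin.tail S) c = 0).card ≤ d * C.card ^ n := by
      rw [← hPncard]
      apply Finset.card_le_mul_card_image_of_maps_to (f := (Fin.tail : (Fin (n+1) → F) → Fin n → F)) (t := Pn)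
      · intro S hS
        simp only [Finset.mem_filter, hT] at hS
        exact tail_mem S hS.1.1
      · intro b _
        by_cases hb : eval b c = 0
        · convert Nat.zero_le d
          rw [Finset.card_eq_zero, Finset.filter_eq_empty_iff]
          rintro S hS rfl
          simp only [Finset.mem_filter] at hS
          exact hS.2 hb
        · set f : Polynomial F := q.map (eval b) with hf
          have hf0 : f ≠ 0 := by
            intro h
            apply hb
            have hco : f.coeff d = 0 := by rw [h]; simp
            rw [hf, Polynomial.coeff_map] at hco
            rw [hcdef, ← Polynomial.coeff_natDegree, ← hd]
            exact hco
          refine (Finset.card_le_card_of_injOn (t := f.roots.toFinset) (fun S => S 0)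
            ?_ ?_).trans
            ((Multiset.toFinset_card_le f.roots).trans
              ((Polynomial.card_roots' f).trans Polynomial.natDegree_map_le))
          · intro S hS
            simp only [Finset.mem_coe, Finset.mem_filter, hT, hP] at hS
            obtain ⟨⟨⟨hSP, hev⟩, hc'⟩, htail⟩ := hS
            rw [Finset.mem_coe, Multiset.mem_toFinset, Polynomial.mem_roots hf0]
            show Polynomial.eval (S 0) f = 0
            rw [hf, ← htail, ← eval_eq_eval_mv_eval', Fin.cons_self_tail]
            exact hev
          · intro S hS S' hS' h0
            simp only [Finset.mem_coe, Finset.mem_filter] at hS hS'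
            have htt := hS.2.trans hS'.2.symm
            funext i
            refine Fin.cases h0 (fun j => congrFun htt j) i
    calc T.card * C.card ≤ ((c.totalDegree * C.card ^ n) + d * C.card ^ n) * C.card := by
          apply Nat.mul_le_mul_right
          exact hsplit.trans (Nat.add_le_add hTA' hTB)
      _ = (c.totalDegree + d) * C.card ^ (n + 1) := by ring
      _ ≤ p.totalDegree * C.card ^ (n + 1) := Nat.mul_le_mul_right _ htd

private lemma sz_gen {F : Type*} [Field F] [DecidableEq F] (C : Finset F)
    {σ : Type*} [Fintype σ] [DecidableEq σ] (p : MvPolynomial σ F) (hp : p ≠ 0) :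
    ((Fintype.piFinset fun _ : σ => C).filter fun S => eval S p = 0).card * C.card
      ≤ p.totalDegree * C.card ^ Fintype.card σ := by
  classical
  set m := Fintype.card σ
  set e : σ ≃ Fin m := Fintype.equivFin σ
  set p' : MvPolynomial (Fin m) F := rename e p with hp'
  have hp'0 : p' ≠ 0 := fun h => hp <| (rename_injective (⇑e) e.injective)
    (by rw [← hp', h, map_zero])
  have htd : p'.totalDegree = p.totalDegree := by
    apply le_antisymm (totalDegree_rename_le _ _)
    have : p = rename e.symm p' := by simp [hp', rename_rename]
    calc p.totalDegree = (rename e.symm p').totalDegree := by rw [← this]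
      _ ≤ p'.totalDegree := totalDegree_rename_le _ _
  have hcard : ((Fintype.piFinset fun _ : σ => C).filter fun S => eval S p = 0).card
      = ((Fintype.piFinset fun _ : Fin m => C).filter fun S => eval S p' = 0).card := by
    apply Finset.card_bij (fun S _ => S ∘ e.symm)
    · intro S hS
      simp only [Finset.mem_filter, Fintype.mem_piFinset] at hS ⊢
      refine ⟨fun i => hS.1 _, ?_⟩
      rw [hp', eval_rename]
      have : (S ∘ e.symm) ∘ e = S := by funext i; simp
      rw [this]; exact hS.2
    · intro S hS S' hS' h
      funext i
      have := congrFun h (e i)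
      simpa using this
    · intro S hS
      refine ⟨S ∘ e, ?_, ?_⟩
      · simp only [Finset.mem_filter, Fintype.mem_piFinset] at hS ⊢
        refine ⟨fun i => hS.1 _, ?_⟩
        rw [hp', eval_rename] at hS
        exact hS.2
      · funext i; simp
  rw [hcard, ← htd]
  exact sz_fin C m p' hp'0

private lemma det_totalDegree_le {F : Type*} [Field F]
    {I J : Type*} {n : ℕ} (f : Fin n → I) (g : Fin n → J) :
    (Matrix.det (Matrix.of fun i j =>
      (MvPolynomial.X (f i, g j) : MvPolynomial (I × J) F))).totalDegree ≤ n := by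
  rw [Matrix.det_apply']
  refine (totalDegree_finset_sum _ _).trans (Finset.sup_le fun σ _ => ?_)
  refine (totalDegree_mul _ _).trans ?_
  have h1 : ((Equiv.Perm.sign σ : ℤ) : MvPolynomial (I × J) F).totalDegree = 0 := by
    rcases Int.units_eq_one_or (Equiv.Perm.sign σ) with h | h <;> simp [h]
  rw [h1, zero_add]
  refine (totalDegree_finset_prod _ _).trans ?_
  calc (∑ i : Fin n, (MvPolynomial.X (f (σ i), g i) :
          MvPolynomial (I × J) F).totalDegree)
      ≤ ∑ _i : Fin n, 1 := Finset.sum_le_sum fun i _ => by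
        rw [totalDegree_X]
    _ = n := by simp

/-- Identity testing for determinant polynomials: if the two `n × n` determinant polynomials in
the indeterminates `X (i, j)`, `(i, j) ∈ I × J`, built from index assignments `(χ, χ')` and
`(ξ, ξ')` are distinct as polynomials, then for a random assignment `S : I × J → C` with all
values independent and uniform on the nonempty finite set `C ⊆ F`, the probability that the two
determinants evaluate to the same element of `F` is at most `n / |C|`. -/
theorem det_identity_testing {F : Type*} [Field F] [DecidableEq F]
    {I J : Type*} [Fintype I] [Fintype J] [DecidableEq I] [DecidableEq J]
    (C : Finset F) (hC : C.Nonempty) {n : ℕ}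
    (χ ξ : Fin n → I) (χ' ξ' : Fin n → J)
    (hne : Matrix.det (Matrix.of fun i j =>
            (MvPolynomial.X (χ i, χ' j) : MvPolynomial (I × J) F))
         ≠ Matrix.det (Matrix.of fun i j =>
            (MvPolynomial.X (ξ i, ξ' j) : MvPolynomial (I × J) F))) :
    (((Fintype.piFinset fun _ : I × J => C).filter fun S =>
        MvPolynomial.eval S (Matrix.det (Matrix.of fun i j =>
          (MvPolynomial.X (χ i, χ' j) : MvPolynomial (I × J) F)))
          = MvPolynomial.eval S (Matrix.det (Matrix.of fun i j =>
          (MvPolynomial.X (ξ i, ξ' j) : MvPolynomial (I × J) F)))).card : ℝ)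
      / (C.card : ℝ) ^ (Fintype.card (I × J))
      ≤ (n : ℝ) / (C.card : ℝ) := by
  set D1 := Matrix.det (Matrix.of fun i j =>
    (MvPolynomial.X (χ i, χ' j) : MvPolynomial (I × J) F)) with hD1
  set D2 := Matrix.det (Matrix.of fun i j =>
    (MvPolynomial.X (ξ i, ξ' j) : MvPolynomial (I × J) F)) with hD2
  have hp : D1 - D2 ≠ 0 := sub_ne_zero.mpr hne
  have hfilter : ((Fintype.piFinset fun _ : I × J => C).filter fun S =>
      eval S D1 = eval S D2)
      = ((Fintype.piFinset fun _ : I × J => C).filter fun S => eval S (D1 - D2) = 0) := by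
    apply Finset.filter_congr
    intro S _
    rw [map_sub, sub_eq_zero]
  have hkey := sz_gen C (D1 - D2) hp
  have hdeg : (D1 - D2).totalDegree ≤ n := by
    refine (totalDegree_sub _ _).trans (max_le ?_ ?_)
    · exact det_totalDegree_le χ χ'
    · exact det_totalDegree_le ξ ξ'
  have hnat : ((Fintype.piFinset fun _ : I × J => C).filter fun S =>
      eval S D1 = eval S D2).card * C.card ≤ n * C.card ^ Fintype.card (I × J) := by
    rw [hfilter]
    exact hkey.trans (Nat.mul_le_mul_right _ hdeg)
  have hCpos : (0 : ℝ) < (C.card : ℝ) := by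
    exact_mod_cast Finset.card_pos.mpr hC
  rw [div_le_div_iff₀ (by positivity) hCpos]
  calc (((Fintype.piFinset fun _ : I × J => C).filter fun S =>
        eval S D1 = eval S D2).card : ℝ) * (C.card : ℝ)
      ≤ (n : ℝ) * (C.card : ℝ) ^ Fintype.card (I × J) := by exact_mod_cast hnat
    _ = (n : ℝ) * (C.card : ℝ) ^ Fintype.card (I × J) := rfl
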